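/- Let H be a Hopf algebra over a commutative ring k, (δ, σ) a modular pair in involution (i.e. S̃(S̃(h)) = σ·h·S(σ) for all h, where S̃(h) = δ(h₍₁₎) S(h₍₂₎)), and assume H is cocommutative or, more generally, work in the category of k-modules with the flip braiding. Define τ₂ : H ⊗ H → H ⊗ H by τ₂(g ⊗ h) = S̃(g)₍₁₎·h ⊗ S̃(g)₍₂₎·σ. Then τ₂³ = id on H ⊗ H. -/

import Mathlib

open TensorProduct Coalgebra HopfAlgebra

variable {k H : Type*} [CommRing k] [Ring H] [HopfAlgebra k H]

/-- The `δ`-twisted antipode `S̃(h) = δ(h₍₁₎) • S(h₍₂₎)`. -/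
noncomputable def twistedAntipode (δ : H →ₐ[k] k) : H →ₗ[k] H :=
  (TensorProduct.lid k H).toLinearMap ∘ₗ
    TensorProduct.map δ.toLinearMap (antipode (R := k)) ∘ₗ Coalgebra.comul

/-- The degree-2 Connes–Moscovici paracocyclic operator
τ₂(g ⊗ h) = S̃(g)₍₁₎·h ⊗ S̃(g)₍₂₎·σ. -/
noncomputable def tau2 (δ : H →ₐ[k] k) (σ : H) : H ⊗[k] H →ₗ[k] H ⊗[k] H :=
  TensorProduct.map (LinearMap.mul' k H) (LinearMap.mulRight k σ) ∘ₗ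
    (TensorProduct.assoc k H H H).symm.toLinearMap ∘ₗ
    LinearMap.lTensor H (TensorProduct.comm k H H).toLinearMap ∘ₗ
    (TensorProduct.assoc k H H H).toLinearMap ∘ₗ
    LinearMap.rTensor H (Coalgebra.comul ∘ₗ twistedAntipode δ)

local notation "𝑺" => (antipode (R := k) (A := H))

lemma antipode_one' : 𝑺 (1 : H) = 1 := by
  have := mul_antipode_rTensor_comul_apply (R := k) (a := (1:H))
  simpa [Bialgebra.comul_one, Algebra.TensorProduct.one_def] using this

/-- product representation -/
noncomputable def mulRepr {a b : H} {ι κ : Type*} (r : Repr k a ι) (s : Repr k b κ) :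
    Repr k (a * b) (ι × κ) where
  index := r.index ×ˢ s.index
  left p := r.left p.1 * s.left p.2
  right p := r.right p.1 * s.right p.2
  eq := by
    rw [Bialgebra.comul_mul, ← r.eq, ← s.eq, Finset.sum_mul_sum]
    simp [Algebra.TensorProduct.tmul_mul_tmul, ← Finset.sum_product']

lemma sum_counit_smul_right {a : H} {ι : Type*} (r : Repr k a ι) :
    ∑ i ∈ r.index, counit (R := k) (r.left i) • r.right i = a := by
  have := congrArg (TensorProduct.lid k H) (sum_counit_tmul_eq r)
  simp only [map_sum, TensorProduct.lid_tmul] at this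
  simpa using this

lemma sum_counit_smul_left {a : H} {ι : Type*} (r : Repr k a ι) :
    ∑ i ∈ r.index, counit (R := k) (r.right i) • r.left i = a := by
  have := congrArg (TensorProduct.rid k H) (sum_tmul_counit_eq r)
  simp only [map_sum, TensorProduct.rid_tmul] at this
  simpa using this

lemma regroup_left {a : H} {ι : Type*} {κ Λ : ι → Type*} (ra : Repr k a ι)
    (γ : ∀ i, Repr k (ra.left i) (κ i))
    (α : ∀ i, Repr k (ra.right i) (Λ i)) (c C : H) :
    (∑ i ∈ ra.index, ∑ p ∈ (α i).index,
      𝑺 (ra.left i * c) * ((α i).left p * C * 𝑺 ((α i).right p)))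
    = ∑ i ∈ ra.index, ∑ p ∈ (γ i).index,
      𝑺 ((γ i).left p * c) * ((γ i).right p * C * 𝑺 (ra.right i)) := by
  have h3 := sum_tmul_tmul_eq ra γ α
  have := congrArg (fun z => (LinearMap.mul' k H ∘ₗ
    map (antipode (R := k) ∘ₗ LinearMap.mulRight k c)
      (LinearMap.mul' k H ∘ₗ map (LinearMap.mulRight k C) (antipode (R := k))) :
        H ⊗[k] (H ⊗[k] H) →ₗ[k] H) z) h3
  simpa [map_sum, mul_assoc] using this.symm

lemma regroup_right {b : H} {ι : Type*} {κ Λ : ι → Type*} (rb : Repr k b ι)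
    (η : ∀ j, Repr k (rb.left j) (κ j))
    (β : ∀ j, Repr k (rb.right j) (Λ j)) (u v w : H) :
    (∑ j ∈ rb.index, ∑ q ∈ (β j).index,
      𝑺 (u * rb.left j) * (v * ((β j).left q * 𝑺 ((β j).right q)) * w))
    = ∑ j ∈ rb.index, ∑ q ∈ (η j).index,
      𝑺 (u * (η j).left q) * (v * ((η j).right q * 𝑺 (rb.right j)) * w) := by
  have h3 := sum_tmul_tmul_eq rb η β
  have := congrArg (fun z => (LinearMap.mul' k H ∘ₗ
    map (antipode (R := k) ∘ₗ LinearMap.mulLeft k u)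
      (LinearMap.mulRight k w ∘ₗ LinearMap.mulLeft k v ∘ₗ LinearMap.mul' k H ∘ₗ
        map LinearMap.id (antipode (R := k))) :
        H ⊗[k] (H ⊗[k] H) →ₗ[k] H) z) h3
  simpa [map_sum, mul_assoc] using this.symm

lemma antipode_mul' (a b : H) : 𝑺 (a * b) = 𝑺 b * 𝑺 a := by
  classical
  set ra := ℛ k a with hra
  set rb := ℛ k b with hrb
  set α : (i : ra.ι) → Repr k (ra.right i) (H × H) := fun i => ℛ k (ra.right i) with hα
  set β : (j : rb.ι) → Repr k (rb.right j) (H × H) := fun j => ℛ k (rb.right j) with hβ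
  set γ : (i : ra.ι) → Repr k (ra.left i) (H × H) := fun i => ℛ k (ra.left i) with hγ
  set η : (j : rb.ι) → Repr k (rb.left j) (H × H) := fun j => ℛ k (rb.left j) with hη
  have hA : (∑ i ∈ ra.index, ∑ j ∈ rb.index, ∑ p ∈ (α i).index, ∑ q ∈ (β j).index,
      𝑺 (ra.left i * rb.left j) *
        ((α i).left p * ((β j).left q * 𝑺 ((β j).right q)) * 𝑺 ((α i).right p)))
      = 𝑺 (a * b) := by
    simp only [← Finset.mul_sum, ← Finset.sum_mul]
    simp only [sum_mul_antipode_eq_algebraMap_counit, Algebra.algebraMap_eq_smul_one, mul_smul_comm,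
      smul_mul_assoc, mul_one, one_mul]
    simp only [← Finset.smul_sum, ← Finset.mul_sum, ← Finset.sum_mul]
    simp only [sum_mul_antipode_eq_algebraMap_counit, Algebra.algebraMap_eq_smul_one, mul_smul_comm,
      smul_mul_assoc, mul_one, one_mul]
    rw [show (a*b) = (∑ i ∈ ra.index, counit (R := k) (ra.right i) • ra.left i) *
        (∑ j ∈ rb.index, counit (R := k) (rb.right j) • rb.left j) by
      rw [sum_counit_smul_left, sum_counit_smul_left]]
    rw [Finset.sum_mul_sum, map_sum]
    refine Finset.sum_congr rfl fun i _ => ?_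
    rw [map_sum]
    refine Finset.sum_congr rfl fun j _ => ?_
    simp [smul_mul_smul_comm, smul_smul, mul_comm]
  rw [← hA]
  -- reorder (i,j,p,q) -> (j,q,i,p)
  rw [Finset.sum_comm]
  calc (∑ j ∈ rb.index, ∑ i ∈ ra.index, ∑ p ∈ (α i).index, ∑ q ∈ (β j).index,
      𝑺 (ra.left i * rb.left j) *
        ((α i).left p * ((β j).left q * 𝑺 ((β j).right q)) * 𝑺 ((α i).right p)))
      = ∑ j ∈ rb.index, ∑ q ∈ (β j).index, ∑ i ∈ ra.index, ∑ p ∈ (α i).index,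
      𝑺 (ra.left i * rb.left j) *
        ((α i).left p * ((β j).left q * 𝑺 ((β j).right q)) * 𝑺 ((α i).right p)) := by
        exact Finset.sum_congr rfl fun j _ =>
          Eq.trans (Finset.sum_congr rfl fun i _ => Finset.sum_comm) Finset.sum_comm
    _ = ∑ j ∈ rb.index, ∑ q ∈ (β j).index, ∑ i ∈ ra.index, ∑ p ∈ (γ i).index,
      𝑺 ((γ i).left p * rb.left j) *
        ((γ i).right p * ((β j).left q * 𝑺 ((β j).right q)) * 𝑺 (ra.right i)) := by
        exact Finset.sum_congr rfl fun j _ => Finset.sum_congr rfl fun q _ =>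
          regroup_left ra γ α (rb.left j) ((β j).left q * 𝑺 ((β j).right q))
    _ = ∑ i ∈ ra.index, ∑ p ∈ (γ i).index, ∑ j ∈ rb.index, ∑ q ∈ (β j).index,
      𝑺 ((γ i).left p * rb.left j) *
        ((γ i).right p * ((β j).left q * 𝑺 ((β j).right q)) * 𝑺 (ra.right i)) := by
        refine Eq.trans (Finset.sum_congr rfl fun j _ => Finset.sum_comm) ?_
        refine Eq.trans Finset.sum_comm ?_
        refine Finset.sum_congr rfl fun i _ => ?_
        exact Eq.trans (Finset.sum_congr rfl fun j _ => Finset.sum_comm) Finset.sum_comm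
    _ = ∑ i ∈ ra.index, ∑ p ∈ (γ i).index, ∑ j ∈ rb.index, ∑ q ∈ (η j).index,
      𝑺 ((γ i).left p * (η j).left q) *
        ((γ i).right p * ((η j).right q * 𝑺 (rb.right j)) * 𝑺 (ra.right i)) := by
        exact Finset.sum_congr rfl fun i _ => Finset.sum_congr rfl fun p _ =>
          regroup_right rb η β ((γ i).left p) ((γ i).right p) (𝑺 (ra.right i))
    _ = ∑ i ∈ ra.index, ∑ j ∈ rb.index, ∑ p ∈ (γ i).index, ∑ q ∈ (η j).index,
      (𝑺 ((γ i).left p * (η j).left q) * ((γ i).right p * (η j).right q)) *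
        (𝑺 (rb.right j) * 𝑺 (ra.right i)) := by
        refine Finset.sum_congr rfl fun i _ => Eq.trans Finset.sum_comm ?_
        refine Finset.sum_congr rfl fun j _ => Finset.sum_congr rfl fun p _ =>
          Finset.sum_congr rfl fun q _ => ?_
        simp [mul_assoc]
    _ = ∑ i ∈ ra.index, ∑ j ∈ rb.index,
      (algebraMap k H (counit (R := k) (ra.left i * rb.left j))) *
        (𝑺 (rb.right j) * 𝑺 (ra.right i)) := by
        refine Finset.sum_congr rfl fun i _ => Finset.sum_congr rfl fun j _ => ?_
        simp only [← Finset.sum_mul]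
        congr 1
        have := sum_antipode_mul_eq_algebraMap_counit (R := k) (mulRepr (γ i) (η j))
        simpa [mulRepr, Finset.sum_product] using this
    _ = 𝑺 b * 𝑺 a := by
        rw [show 𝑺 b = ∑ j ∈ rb.index, counit (R := k) (rb.left j) • 𝑺 (rb.right j) by
          conv_lhs => rw [← sum_counit_smul_right rb]
          rw [map_sum]; simp only [map_smul]]
        rw [show 𝑺 a = ∑ i ∈ ra.index, counit (R := k) (ra.left i) • 𝑺 (ra.right i) by
          conv_lhs => rw [← sum_counit_smul_right ra]
          rw [map_sum]; simp only [map_smul]]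
        rw [Finset.sum_mul_sum, Finset.sum_comm]
        refine Finset.sum_congr rfl fun i _ => Finset.sum_congr rfl fun j _ => ?_
        simp [Bialgebra.counit_mul, Algebra.algebraMap_eq_smul_one, smul_mul_assoc,
          mul_smul_comm, smul_smul, mul_comm]
lemma W_collapse {z : H} {ι : Type*} (r : Repr k z ι) (c : H) :
    ∑ i ∈ r.index, Coalgebra.comul (R := k) (r.left i) * (c ⊗ₜ[k] 𝑺 (r.right i))
      = (z * c) ⊗ₜ[k] (1 : H) := by
  classical
  set a₁ : (i : r.ι) → Repr k (r.left i) (H × H) := fun i => ℛ k (r.left i) with ha₁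
  set a₂ : (i : r.ι) → Repr k (r.right i) (H × H) := fun i => ℛ k (r.right i) with ha₂
  calc ∑ i ∈ r.index, Coalgebra.comul (R := k) (r.left i) * (c ⊗ₜ[k] 𝑺 (r.right i))
      = ∑ i ∈ r.index, ∑ p ∈ (a₁ i).index,
        ((a₁ i).left p * c) ⊗ₜ[k] ((a₁ i).right p * 𝑺 (r.right i)) := by
        refine Finset.sum_congr rfl fun i _ => ?_
        rw [← (a₁ i).eq, Finset.sum_mul]
        exact Finset.sum_congr rfl fun p _ => by
          rw [Algebra.TensorProduct.tmul_mul_tmul]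
    _ = ∑ i ∈ r.index, ∑ p ∈ (a₂ i).index,
        (r.left i * c) ⊗ₜ[k] ((a₂ i).left p * 𝑺 ((a₂ i).right p)) := by
        have h3 := sum_tmul_tmul_eq r a₁ a₂
        have := congrArg (fun w => (map (LinearMap.mulRight k c)
          (LinearMap.mul' k H ∘ₗ LinearMap.lTensor H (antipode (R := k))) :
            H ⊗[k] (H ⊗[k] H) →ₗ[k] H ⊗[k] H) w) h3
        simpa [map_sum] using this
    _ = (z * c) ⊗ₜ[k] (1 : H) := by
        have h1 : ∀ i ∈ r.index, ∑ p ∈ (a₂ i).index,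
            (r.left i * c) ⊗ₜ[k] ((a₂ i).left p * 𝑺 ((a₂ i).right p))
            = counit (R := k) (r.right i) • ((r.left i * c) ⊗ₜ[k] (1:H)) := fun i _ => by
          rw [← tmul_sum, sum_mul_antipode_eq_algebraMap_counit (a₂ i), Algebra.algebraMap_eq_smul_one, tmul_smul]
        rw [Finset.sum_congr rfl h1]
        have := congrArg (fun w => ((((TensorProduct.mk k H H).flip (1:H))) ∘ₗ
          LinearMap.mulRight k c : H →ₗ[k] H ⊗[k] H) w) (sum_counit_smul_left r)
        simpa [map_sum] using this

lemma bracket_collapse {A : H} {ι : Type*} {Λ : ι → Type*} (s : Repr k A ι)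
    (t : ∀ j, Repr k (s.right j) (Λ j)) :
    ∑ j ∈ s.index, ∑ p ∈ (t j).index,
      Coalgebra.comul (R := k) (s.left j) * (𝑺 ((t j).right p) ⊗ₜ[k] 𝑺 ((t j).left p))
      = counit (R := k) A • ((1:H) ⊗ₜ[k] (1:H)) := by
  classical
  set u : (j : s.ι) → Repr k (s.left j) (H × H) := fun j => ℛ k (s.left j) with hu
  have h3 := sum_tmul_tmul_eq s u t
  have h4 := congrArg (fun w => (LinearMap.mul' k (H ⊗[k] H) ∘ₗ
    map Coalgebra.comul (map (antipode (R := k)) (antipode (R := k)) ∘ₗ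
      (TensorProduct.comm k H H).toLinearMap) :
        H ⊗[k] (H ⊗[k] H) →ₗ[k] H ⊗[k] H) w) h3
  simp only [map_sum, LinearMap.coe_comp, Function.comp_apply, map_tmul,
    LinearMap.mul'_apply, TensorProduct.comm_tmul, LinearEquiv.coe_coe] at h4
  rw [← h4]
  have h5 : ∀ j ∈ s.index, ∑ p ∈ (u j).index,
      Coalgebra.comul (R := k) ((u j).left p) * (𝑺 (s.right j) ⊗ₜ[k] 𝑺 ((u j).right p))
      = (s.left j * 𝑺 (s.right j)) ⊗ₜ[k] (1:H) := fun j _ => W_collapse (u j) _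
  rw [Finset.sum_congr rfl h5, ← sum_tmul, sum_mul_antipode_eq_algebraMap_counit s,
    Algebra.algebraMap_eq_smul_one, smul_tmul']

/-- `Γ = (S ⊗ S) ∘ flip ∘ Δ` -/
noncomputable def GammaSS : H →ₗ[k] H ⊗[k] H :=
  map (antipode (R := k)) (antipode (R := k)) ∘ₗ
    (TensorProduct.comm k H H).toLinearMap ∘ₗ Coalgebra.comul

lemma GammaSS_apply {b : H} {ι : Type*} (s : Repr k b ι) :
    GammaSS (k := k) b = ∑ i ∈ s.index, 𝑺 (s.right i) ⊗ₜ[k] 𝑺 (s.left i) := by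
  rw [GammaSS]
  simp only [LinearMap.coe_comp, Function.comp_apply, LinearEquiv.coe_coe]
  rw [← s.eq]
  simp only [map_sum, TensorProduct.comm_tmul, map_tmul]

lemma bracket_collapse' {A : H} {ι : Type*} (s : Repr k A ι) :
    ∑ j ∈ s.index, Coalgebra.comul (R := k) (s.left j) * GammaSS (k := k) (s.right j)
      = counit (R := k) A • (1 : H ⊗[k] H) := by
  have := bracket_collapse s (fun j => ℛ k (s.right j))
  rw [Algebra.TensorProduct.one_def]
  rw [← this]
  refine Finset.sum_congr rfl fun j _ => ?_
  rw [GammaSS_apply (ℛ k (s.right j)), Finset.mul_sum]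

lemma comul_antipode_repr {a : H} {ι : Type*} (r : Repr k a ι) :
    Coalgebra.comul (R := k) (𝑺 a) = ∑ i ∈ r.index, 𝑺 (r.right i) ⊗ₜ[k] 𝑺 (r.left i) := by
  classical
  set ra := ℛ k a with hraa
  set α : (i : ra.ι) → Repr k (ra.right i) (H × H) := fun i => ℛ k (ra.right i) with hα
  set γ : (i : ra.ι) → Repr k (ra.left i) (H × H) := fun i => ℛ k (ra.left i) with hγ
  have hEval2 : (∑ i ∈ ra.index, ∑ j ∈ (α i).index,
      Coalgebra.comul (R := k) (𝑺 (ra.left i)) *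
        (Coalgebra.comul (R := k) ((α i).left j) * GammaSS (k := k) ((α i).right j)))
      = Coalgebra.comul (R := k) (𝑺 a) := by
    have h6 : ∀ i ∈ ra.index, ∑ j ∈ (α i).index,
        Coalgebra.comul (R := k) (𝑺 (ra.left i)) *
          (Coalgebra.comul (R := k) ((α i).left j) * GammaSS (k := k) ((α i).right j))
        = counit (R := k) (ra.right i) • Coalgebra.comul (R := k) (𝑺 (ra.left i)) := by
      intro i _
      rw [← Finset.mul_sum, bracket_collapse' (α i), mul_smul_comm, mul_one]
    rw [Finset.sum_congr rfl h6]
    have := congrArg (fun w => (Coalgebra.comul ∘ₗ antipode (R := k) : H →ₗ[k] H ⊗[k] H) w)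
      (sum_counit_smul_left ra)
    simpa [map_sum] using this
  have hEval1 : (∑ i ∈ ra.index, ∑ j ∈ (α i).index,
      Coalgebra.comul (R := k) (𝑺 (ra.left i)) *
        (Coalgebra.comul (R := k) ((α i).left j) * GammaSS (k := k) ((α i).right j)))
      = GammaSS (k := k) a := by
    have h3 := sum_tmul_tmul_eq ra γ α
    have h4 := congrArg (fun w => (LinearMap.mul' k (H ⊗[k] H) ∘ₗ
      map (Coalgebra.comul ∘ₗ antipode (R := k))
        (LinearMap.mul' k (H ⊗[k] H) ∘ₗ map Coalgebra.comul (GammaSS (k := k))) :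
          H ⊗[k] (H ⊗[k] H) →ₗ[k] H ⊗[k] H) w) h3
    simp only [map_sum, LinearMap.coe_comp, Function.comp_apply, map_tmul,
      LinearMap.mul'_apply] at h4
    rw [← h4]
    have h7 : ∀ i ∈ ra.index, ∑ j ∈ (γ i).index,
        Coalgebra.comul (R := k) (𝑺 ((γ i).left j)) *
          (Coalgebra.comul (R := k) ((γ i).right j) * GammaSS (k := k) (ra.right i))
        = counit (R := k) (ra.left i) • GammaSS (k := k) (ra.right i) := by
      intro i _
      have h8 : ∀ j ∈ (γ i).index,
          Coalgebra.comul (R := k) (𝑺 ((γ i).left j)) *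
            (Coalgebra.comul (R := k) ((γ i).right j) * GammaSS (k := k) (ra.right i))
          = Coalgebra.comul (R := k) (𝑺 ((γ i).left j) * (γ i).right j) *
              GammaSS (k := k) (ra.right i) :=
        fun j _ => by rw [Bialgebra.comul_mul, mul_assoc]
      rw [Finset.sum_congr rfl h8, ← Finset.sum_mul, ← map_sum, sum_antipode_mul_eq_algebraMap_counit (γ i),
        Bialgebra.comul_algebraMap, ← Algebra.smul_def]
    rw [Finset.sum_congr rfl h7]
    have := congrArg (fun w => GammaSS (k := k) w) (sum_counit_smul_right ra)
    simpa [map_sum] using this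
  exact hEval2.symm.trans (hEval1.trans (GammaSS_apply r))

variable (δ : H →ₐ[k] k)

lemma tA_apply {a : H} {ι : Type*} (r : Repr k a ι) :
    twistedAntipode δ a = ∑ i ∈ r.index, δ (r.left i) • 𝑺 (r.right i) := by
  rw [twistedAntipode]
  simp only [LinearMap.coe_comp, Function.comp_apply, LinearEquiv.coe_coe]
  rw [← r.eq]
  simp only [map_sum, map_tmul, TensorProduct.lid_tmul, AlgHom.toLinearMap_apply]

lemma tA_mul (a b : H) :
    twistedAntipode δ (a * b) = twistedAntipode δ b * twistedAntipode δ a := by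
  classical
  set ra := ℛ k a
  set rb := ℛ k b
  rw [tA_apply δ (mulRepr ra rb), tA_apply δ ra, tA_apply δ rb,
    Finset.sum_mul_sum, Finset.sum_comm]
  simp only [mulRepr, Finset.sum_product]
  refine Finset.sum_congr rfl fun i _ => Finset.sum_congr rfl fun j _ => ?_
  rw [map_mul, antipode_mul', smul_mul_smul_comm, mul_comm (δ (ra.left i))]

lemma comul_tA {a : H} {ι : Type*} (r : Repr k a ι) :
    Coalgebra.comul (R := k) (twistedAntipode δ a)
      = ∑ i ∈ r.index, 𝑺 (r.right i) ⊗ₜ[k] twistedAntipode δ (r.left i) := by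
  classical
  set a₁ : (i : r.ι) → Repr k (r.left i) (H × H) := fun i => ℛ k (r.left i) with ha₁
  set a₂ : (i : r.ι) → Repr k (r.right i) (H × H) := fun i => ℛ k (r.right i) with ha₂
  have h3 := sum_tmul_tmul_eq r a₁ a₂
  have h4 := congrArg (fun w => ((TensorProduct.lid k (H ⊗[k] H)).toLinearMap ∘ₗ
    map δ.toLinearMap (map (antipode (R := k)) (antipode (R := k)) ∘ₗ
      (TensorProduct.comm k H H).toLinearMap) :
        H ⊗[k] (H ⊗[k] H) →ₗ[k] H ⊗[k] H) w) h3
  simp only [map_sum, LinearMap.coe_comp, Function.comp_apply, map_tmul, LinearEquiv.coe_coe,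
    TensorProduct.comm_tmul, TensorProduct.lid_tmul, AlgHom.toLinearMap_apply] at h4
  calc Coalgebra.comul (R := k) (twistedAntipode δ a)
      = ∑ i ∈ r.index, ∑ p ∈ (a₂ i).index,
          δ (r.left i) • (𝑺 ((a₂ i).right p) ⊗ₜ[k] 𝑺 ((a₂ i).left p)) := by
        rw [tA_apply δ r, map_sum]
        refine Finset.sum_congr rfl fun i _ => ?_
        rw [map_smul, comul_antipode_repr (a₂ i), Finset.smul_sum]
    _ = ∑ i ∈ r.index, ∑ p ∈ (a₁ i).index,
          δ ((a₁ i).left p) • (𝑺 (r.right i) ⊗ₜ[k] 𝑺 ((a₁ i).right p)) := h4.symm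
    _ = ∑ i ∈ r.index, 𝑺 (r.right i) ⊗ₜ[k] twistedAntipode δ (r.left i) := by
        refine Finset.sum_congr rfl fun i _ => ?_
        rw [tA_apply δ (a₁ i), tmul_sum]
        exact Finset.sum_congr rfl fun p _ => by rw [tmul_smul]

lemma C2_collapse {x : H} {ι : Type*} (s : Repr k x ι) :
    ∑ j ∈ s.index, 𝑺 (𝑺 (s.right j)) * twistedAntipode δ (s.left j)
      = algebraMap k H (δ x) := by
  classical
  set b : (j : s.ι) → Repr k (s.left j) (H × H) := fun j => ℛ k (s.left j) with hb
  set c : (j : s.ι) → Repr k (s.right j) (H × H) := fun j => ℛ k (s.right j) with hc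
  have h3 := sum_tmul_tmul_eq s b c
  have h4 := congrArg (fun w => ((TensorProduct.lid k H).toLinearMap ∘ₗ
    map δ.toLinearMap (antipode (R := k) ∘ₗ LinearMap.mul' k H ∘ₗ
      LinearMap.lTensor H (antipode (R := k))) :
        H ⊗[k] (H ⊗[k] H) →ₗ[k] H) w) h3
  simp only [map_sum, LinearMap.coe_comp, Function.comp_apply, map_tmul, LinearEquiv.coe_coe,
    LinearMap.lTensor_tmul, LinearMap.mul'_apply, TensorProduct.lid_tmul,
    AlgHom.toLinearMap_apply] at h4
  calc ∑ j ∈ s.index, 𝑺 (𝑺 (s.right j)) * twistedAntipode δ (s.left j)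
      = ∑ j ∈ s.index, ∑ p ∈ (b j).index,
          δ ((b j).left p) • 𝑺 ((b j).right p * 𝑺 (s.right j)) := by
        refine Finset.sum_congr rfl fun j _ => ?_
        rw [tA_apply δ (b j), Finset.mul_sum]
        exact Finset.sum_congr rfl fun p _ => by
          rw [mul_smul_comm, antipode_mul']
    _ = ∑ j ∈ s.index, ∑ p ∈ (c j).index,
          δ (s.left j) • 𝑺 ((c j).left p * 𝑺 ((c j).right p)) := h4
    _ = algebraMap k H (δ x) := by
        have h5 : ∀ j ∈ s.index, ∑ p ∈ (c j).index,
            δ (s.left j) • 𝑺 ((c j).left p * 𝑺 ((c j).right p))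
            = (counit (R := k) (s.right j) • δ (s.left j)) • (1 : H) := by
          intro j _
          rw [← Finset.smul_sum, ← map_sum, sum_mul_antipode_eq_algebraMap_counit (c j),
            Algebra.algebraMap_eq_smul_one, map_smul, antipode_one', smul_comm, smul_assoc]
        rw [Finset.sum_congr rfl h5]
        have := congrArg (fun w => δ w) (sum_counit_smul_left s)
        simp only [map_sum, map_smul] at this
        rw [Algebra.algebraMap_eq_smul_one, ← this, Finset.sum_smul]

lemma tau2_apply_repr (σ : H) {g : H} (h : H) {ι : Type*} (r : Repr k g ι) :
    tau2 δ σ (g ⊗ₜ[k] h) = ∑ i ∈ r.index,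
      (𝑺 (r.right i) * h) ⊗ₜ[k] (twistedAntipode δ (r.left i) * σ) := by
  rw [tau2]
  simp only [LinearMap.coe_comp, Function.comp_apply, LinearEquiv.coe_coe,
    LinearMap.rTensor_tmul]
  rw [comul_tA δ r]
  simp only [sum_tmul, map_sum, assoc_tmul, LinearMap.lTensor_tmul, LinearEquiv.coe_coe,
    TensorProduct.comm_tmul, assoc_symm_tmul, map_tmul, LinearMap.mul'_apply,
    LinearMap.mulRight_apply]

lemma tau2_sq_core (σ c1 c2 c3 : H) {g : H} {ι : Type*} {κ Λ : ι → Type*} (rg : Repr k g ι)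
    (a₁ : ∀ i, Repr k (rg.left i) (κ i)) (sx : ∀ i, Repr k (rg.right i) (Λ i)) :
    ∑ i ∈ rg.index, ∑ p ∈ (sx i).index,
      ((c1 * 𝑺 (𝑺 ((sx i).left p))) * (twistedAntipode δ (rg.left i) * c2)) ⊗ₜ[k]
        ((c3 * twistedAntipode δ (𝑺 ((sx i).right p))) * σ)
    = (c1 * c2) ⊗ₜ[k] ((c3 * twistedAntipode δ (twistedAntipode δ g)) * σ) := by
  classical
  have h3 := sum_tmul_tmul_eq rg a₁ sx
  have h4 := congrArg (fun w => (map
    (LinearMap.mul' k H ∘ₗ map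
      (LinearMap.mulLeft k c1 ∘ₗ antipode (R := k) ∘ₗ antipode (R := k))
      (LinearMap.mulRight k c2 ∘ₗ twistedAntipode δ) ∘ₗ
      (TensorProduct.comm k H H).toLinearMap)
    (LinearMap.mulRight k σ ∘ₗ LinearMap.mulLeft k c3 ∘ₗ twistedAntipode δ ∘ₗ
      antipode (R := k)) ∘ₗ
    (TensorProduct.assoc k H H H).symm.toLinearMap :
      H ⊗[k] (H ⊗[k] H) →ₗ[k] H ⊗[k] H) w) h3
  simp only [map_sum, LinearMap.coe_comp, Function.comp_apply, LinearEquiv.coe_coe,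
    assoc_symm_tmul, map_tmul, TensorProduct.comm_tmul, LinearMap.mul'_apply,
    LinearMap.mulLeft_apply, LinearMap.mulRight_apply] at h4
  rw [← h4]
  have h5 : ∀ i ∈ rg.index, ∑ p ∈ (a₁ i).index,
      ((c1 * 𝑺 (𝑺 ((a₁ i).right p))) * (twistedAntipode δ ((a₁ i).left p) * c2)) ⊗ₜ[k]
        ((c3 * twistedAntipode δ (𝑺 (rg.right i))) * σ)
      = δ (rg.left i) • ((c1 * c2) ⊗ₜ[k]
          ((c3 * twistedAntipode δ (𝑺 (rg.right i))) * σ)) := by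
    intro i _
    rw [← sum_tmul]
    congr 1
    have h6 : ∀ p ∈ (a₁ i).index,
        (c1 * 𝑺 (𝑺 ((a₁ i).right p))) * (twistedAntipode δ ((a₁ i).left p) * c2)
        = c1 * ((𝑺 (𝑺 ((a₁ i).right p)) * twistedAntipode δ ((a₁ i).left p)) * c2) := by
      intro p _
      rw [mul_assoc, mul_assoc]
    rw [Finset.sum_congr rfl h6, ← Finset.mul_sum, ← Finset.sum_mul, C2_collapse δ (a₁ i),
      Algebra.algebraMap_eq_smul_one, smul_mul_assoc, one_mul, mul_smul_comm]
  rw [Finset.sum_congr rfl h5]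
  have h7 : twistedAntipode δ (twistedAntipode δ g)
      = ∑ i ∈ rg.index, δ (rg.left i) • twistedAntipode δ (𝑺 (rg.right i)) := by
    rw [tA_apply δ rg, map_sum]
    simp only [map_smul]
  rw [h7, Finset.mul_sum, Finset.sum_mul, tmul_sum]
  refine Finset.sum_congr rfl fun i _ => ?_
  rw [mul_smul_comm, smul_mul_assoc, tmul_smul]

/-- representation of a grouplike element -/
noncomputable def grouplikeRepr (σ : H) (hΔ : Coalgebra.comul (R := k) σ = σ ⊗ₜ[k] σ) :
    Repr k σ Unit where
  index := Finset.univ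
  left _ := σ
  right _ := σ
  eq := by simp [hΔ]

/-- antipode representation -/
noncomputable def antipodeRepr {a : H} {ι : Type*} (r : Repr k a ι) : Repr k (𝑺 a) ι where
  index := r.index
  left i := 𝑺 (r.right i)
  right i := 𝑺 (r.left i)
  eq := (comul_antipode_repr r).symm

theorem tau2_cube' (σ : H)
    (hΔ : Coalgebra.comul (R := k) σ = σ ⊗ₜ[k] σ)
    (hε : Coalgebra.counit (R := k) σ = (1 : k))
    (hδσ : δ σ = 1)
    (hMPI : ∀ h : H, twistedAntipode δ (twistedAntipode δ h) =
      σ * h * antipode (R := k) σ) :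
    ∀ x : H ⊗[k] H, tau2 δ σ (tau2 δ σ (tau2 δ σ x)) = x := by
  classical
  have hSσ : 𝑺 σ * σ = 1 := by
    have := mul_antipode_rTensor_comul_apply (R := k) (a := σ)
    rw [hΔ, hε] at this
    simpa using this
  have hStσ : twistedAntipode δ σ = 𝑺 σ := by
    rw [tA_apply δ (grouplikeRepr σ hΔ)]
    simp [grouplikeRepr, hδσ]
  intro x
  induction x using TensorProduct.induction_on with
  | zero => simp
  | add y z hy hz => simp [map_add, hy, hz]
  | tmul g h =>
    set rg := ℛ k g with hrg
    set rh := ℛ k h with hrh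
    set sx : (i : rg.ι) → Repr k (rg.right i) (H × H) := fun i => ℛ k (rg.right i) with hsx
    set a₁g : (i : rg.ι) → Repr k (rg.left i) (H × H) := fun i => ℛ k (rg.left i) with ha₁g
    set sy : (q : rh.ι) → Repr k (rh.right q) (H × H) := fun q => ℛ k (rh.right q) with hsy
    set a₁h : (q : rh.ι) → Repr k (rh.left q) (H × H) := fun q => ℛ k (rh.left q) with ha₁h
    -- τ²
    have step2 : tau2 δ σ (tau2 δ σ (g ⊗ₜ[k] h))
        = ∑ q ∈ rh.index, (𝑺 (rh.right q) * σ) ⊗ₜ[k]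
            (twistedAntipode δ (rh.left q) * (σ * g)) := by
      rw [tau2_apply_repr δ σ h rg, map_sum]
      calc ∑ i ∈ rg.index, tau2 δ σ ((𝑺 (rg.right i) * h) ⊗ₜ[k]
              (twistedAntipode δ (rg.left i) * σ))
          = ∑ i ∈ rg.index, ∑ p ∈ (sx i).index, ∑ q ∈ rh.index,
            ((𝑺 (rh.right q) * 𝑺 (𝑺 ((sx i).left p))) *
              (twistedAntipode δ (rg.left i) * σ)) ⊗ₜ[k]
            ((twistedAntipode δ (rh.left q) * twistedAntipode δ (𝑺 ((sx i).right p))) * σ) := by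
            refine Finset.sum_congr rfl fun i _ => ?_
            rw [tau2_apply_repr δ σ _ (mulRepr (antipodeRepr (sx i)) rh)]
            simp only [mulRepr, antipodeRepr, Finset.sum_product]
            refine Finset.sum_congr rfl fun p _ => Finset.sum_congr rfl fun q _ => ?_
            rw [antipode_mul', tA_mul]
        _ = ∑ q ∈ rh.index, ∑ i ∈ rg.index, ∑ p ∈ (sx i).index,
            (((𝑺 (rh.right q)) * 𝑺 (𝑺 ((sx i).left p))) *
              (twistedAntipode δ (rg.left i) * σ)) ⊗ₜ[k]
            (((twistedAntipode δ (rh.left q)) * twistedAntipode δ (𝑺 ((sx i).right p))) * σ) := by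
            refine Eq.trans (Finset.sum_congr rfl fun i _ => Finset.sum_comm) ?_
            exact Finset.sum_comm
        _ = ∑ q ∈ rh.index, (𝑺 (rh.right q) * σ) ⊗ₜ[k]
            ((twistedAntipode δ (rh.left q) * twistedAntipode δ (twistedAntipode δ g)) * σ) := by
            exact Finset.sum_congr rfl fun q _ =>
              tau2_sq_core δ σ (𝑺 (rh.right q)) σ (twistedAntipode δ (rh.left q)) rg a₁g sx
        _ = ∑ q ∈ rh.index, (𝑺 (rh.right q) * σ) ⊗ₜ[k]
            (twistedAntipode δ (rh.left q) * (σ * g)) := by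
            refine Finset.sum_congr rfl fun q _ => ?_
            rw [hMPI g]
            congr 1
            rw [mul_assoc, mul_assoc, mul_assoc, hSσ, mul_one]
    rw [step2, map_sum]
    -- τ³
    calc ∑ q ∈ rh.index, tau2 δ σ ((𝑺 (rh.right q) * σ) ⊗ₜ[k]
            (twistedAntipode δ (rh.left q) * (σ * g)))
        = ∑ q ∈ rh.index, ∑ p ∈ (sy q).index,
          ((𝑺 σ * 𝑺 (𝑺 ((sy q).left p))) *
            (twistedAntipode δ (rh.left q) * (σ * g))) ⊗ₜ[k]
          ((𝑺 σ * twistedAntipode δ (𝑺 ((sy q).right p))) * σ) := by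
          refine Finset.sum_congr rfl fun q _ => ?_
          rw [tau2_apply_repr δ σ _ (mulRepr (antipodeRepr (sy q)) (grouplikeRepr σ hΔ))]
          simp only [mulRepr, antipodeRepr, grouplikeRepr, Finset.sum_product,
            Finset.univ_unique, Finset.sum_singleton]
          refine Finset.sum_congr rfl fun p _ => ?_
          rw [antipode_mul', tA_mul, hStσ]
      _ = (𝑺 σ * (σ * g)) ⊗ₜ[k]
          ((𝑺 σ * twistedAntipode δ (twistedAntipode δ h)) * σ) :=
          tau2_sq_core δ σ (𝑺 σ) (σ * g) (𝑺 σ) rh a₁h sy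
      _ = g ⊗ₜ[k] h := by
          rw [hMPI h]
          congr 1
          · rw [← mul_assoc, hSσ, one_mul]
          · rw [mul_assoc σ h, ← mul_assoc (𝑺 σ), hSσ, one_mul, mul_assoc, hSσ, mul_one]


/-- for a modular pair in involution, τ₂³ = id on H ⊗ H. -/
theorem tau2_cube (δ : H →ₐ[k] k) (σ : H)
    (hΔ : Coalgebra.comul (R := k) σ = σ ⊗ₜ[k] σ)
    (hε : Coalgebra.counit (R := k) σ = (1 : k))
    (hδσ : δ σ = 1)
    (hMPI : ∀ h : H, twistedAntipode δ (twistedAntipode δ h) =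
      σ * h * antipode (R := k) σ) :
    ∀ x : H ⊗[k] H, tau2 δ σ (tau2 δ σ (tau2 δ σ x)) = x := by
  exact tau2_cube' δ σ hΔ hε hδσ hMPI
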